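/- arXiv:1411.6720 — 6 statements merged into one kernel-verified Lean document; each statement's English description precedes it below -/
import Mathlib

section
/- Let S21 : ℝ^a × ℝ^b → ℝ and S32 : ℝ^b × ℝ^c → ℝ be C¹ generating functions of thick morphisms ℝ^a ⇢ ℝ^b and ℝ^b ⇢ ℝ^c. Suppose y : ℝ^a × ℝ^c → ℝ^b and q : ℝ^a × ℝ^c → ℝ^b are differentiable maps satisfying, for all (x,r): q(x,r) = ∇_y S32(y(x,r), r) and y(x,r) = ∇_q S21(x, q(x,r)). Define S31 : ℝ^a × ℝ^c → ℝ by S31(x,r) := S32(y(x,r), r) + S21(x, q(x,r)) − ⟨q(x,r), y(x,r)⟩. Then for all (x,r): ∇_x S31(x,r) = ∇_x S21(x, q(x,r)) and ∇_r S31(x,r) = ∇_r S32(y(x,r), r). Consequently the relation Φ_{S31} is contained in the set-theoretic composition Φ_{S32} ∘ Φ_{S21}: for every (x,r), setting z = ∇_r S31(x,r) and p = ∇_x S31(x,r), the point (z, r; y(x,r), q(x,r)) lies in Φ_{S32} and the point (y(x,r), q(x,r); x, p) lies in Φ_{S21}. -/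
open scoped RealInnerProductSpace

/-- Partial gradient of `S : ℝ^a × ℝ^b → ℝ` in the first (source point) variable. -/
noncomputable def gradx {a b : ℕ} (S : EuclideanSpace ℝ (Fin a) × EuclideanSpace ℝ (Fin b) → ℝ)
    (x : EuclideanSpace ℝ (Fin a)) (q : EuclideanSpace ℝ (Fin b)) : EuclideanSpace ℝ (Fin a) :=
  gradient (fun x' => S (x', q)) x

/-- Partial gradient of `S : ℝ^a × ℝ^b → ℝ` in the second (target momentum) variable. -/
noncomputable def gradq {a b : ℕ} (S : EuclideanSpace ℝ (Fin a) × EuclideanSpace ℝ (Fin b) → ℝ)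
    (x : EuclideanSpace ℝ (Fin a)) (q : EuclideanSpace ℝ (Fin b)) : EuclideanSpace ℝ (Fin b) :=
  gradient (fun q' => S (x, q')) q

lemma inner_gradx {a b : ℕ} (S : EuclideanSpace ℝ (Fin a) × EuclideanSpace ℝ (Fin b) → ℝ)
    (hS : ContDiff ℝ 1 S) (x : EuclideanSpace ℝ (Fin a)) (q : EuclideanSpace ℝ (Fin b))
    (w : EuclideanSpace ℝ (Fin a)) :
    ⟪gradx S x q, w⟫ = fderiv ℝ S (x, q) (w, 0) := by
  have hd : HasFDerivAt (fun x' => S (x', q))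
      ((fderiv ℝ S (x, q)).comp (ContinuousLinearMap.inl ℝ _ _)) x :=
    ((hS.differentiable one_ne_zero (x, q)).hasFDerivAt).comp x (hasFDerivAt_prodMk_left x q)
  have hg : HasGradientAt (fun x' => S (x', q)) (gradx S x q) x :=
    hd.differentiableAt.hasGradientAt
  have hu := (hasGradientAt_iff_hasFDerivAt.mp hg).unique hd
  have := congrArg (fun L : EuclideanSpace ℝ (Fin a) →L[ℝ] ℝ => L w) hu
  simpa [InnerProductSpace.toDual_apply_apply] using this

lemma inner_gradq {a b : ℕ} (S : EuclideanSpace ℝ (Fin a) × EuclideanSpace ℝ (Fin b) → ℝ)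
    (hS : ContDiff ℝ 1 S) (x : EuclideanSpace ℝ (Fin a)) (q : EuclideanSpace ℝ (Fin b))
    (w : EuclideanSpace ℝ (Fin b)) :
    ⟪gradq S x q, w⟫ = fderiv ℝ S (x, q) (0, w) := by
  have hd : HasFDerivAt (fun q' => S (x, q'))
      ((fderiv ℝ S (x, q)).comp (ContinuousLinearMap.inr ℝ _ _)) q :=
    ((hS.differentiable one_ne_zero (x, q)).hasFDerivAt).comp q (hasFDerivAt_prodMk_right x q)
  have hg : HasGradientAt (fun q' => S (x, q')) (gradq S x q) q :=
    hd.differentiableAt.hasGradientAt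
  have hu := (hasGradientAt_iff_hasFDerivAt.mp hg).unique hd
  have := congrArg (fun L : EuclideanSpace ℝ (Fin b) →L[ℝ] ℝ => L w) hu
  simpa [InnerProductSpace.toDual_apply_apply] using this

/-- The formal canonical relation `Φ_S ⊆ T*ℝ^b × T*ℝ^a` determined by a generating
function `S : ℝ^a × ℝ^b → ℝ`:  `(y, q; x, p) ∈ Φ_S ↔ y = ∇_q S(x,q) ∧ p = ∇_x S(x,q)`. -/
def thickRel {a b : ℕ} (S : EuclideanSpace ℝ (Fin a) × EuclideanSpace ℝ (Fin b) → ℝ) :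
    Set ((EuclideanSpace ℝ (Fin b) × EuclideanSpace ℝ (Fin b)) ×
      (EuclideanSpace ℝ (Fin a) × EuclideanSpace ℝ (Fin a))) :=
  {z | z.1.1 = gradq S z.2.1 z.1.2 ∧ z.2.2 = gradx S z.2.1 z.1.2}

/-- Composition of thick morphisms: the generating function
`S31 = S32 + S21 − ⟨q, y⟩` of the composite satisfies `∇_x S31 = ∇_x S21` and
`∇_r S31 = ∇_r S32` at the solution of the coupled system, and the relation it
generates is contained in the set-theoretic composition of the two relations. -/
theorem thick_composition {a b c : ℕ}
    (S21 : EuclideanSpace ℝ (Fin a) × EuclideanSpace ℝ (Fin b) → ℝ)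
    (S32 : EuclideanSpace ℝ (Fin b) × EuclideanSpace ℝ (Fin c) → ℝ)
    (hS21 : ContDiff ℝ 1 S21) (hS32 : ContDiff ℝ 1 S32)
    (y q : EuclideanSpace ℝ (Fin a) × EuclideanSpace ℝ (Fin c) → EuclideanSpace ℝ (Fin b))
    (hy : Differentiable ℝ y) (hq : Differentiable ℝ q)
    (hsys1 : ∀ x r, q (x, r) = gradx S32 (y (x, r)) r)
    (hsys2 : ∀ x r, y (x, r) = gradq S21 x (q (x, r)))
    (S31 : EuclideanSpace ℝ (Fin a) × EuclideanSpace ℝ (Fin c) → ℝ)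
    (hS31 : ∀ x r, S31 (x, r) = S32 (y (x, r), r) + S21 (x, q (x, r)) - ⟪q (x, r), y (x, r)⟫) :
    ∀ x r,
      gradx S31 x r = gradx S21 x (q (x, r)) ∧
      gradq S31 x r = gradq S32 (y (x, r)) r ∧
      ((gradq S31 x r, r), (y (x, r), q (x, r))) ∈ thickRel S32 ∧
      ((y (x, r), q (x, r)), (x, gradx S31 x r)) ∈ thickRel S21 := by
  intro x r
  have hgx : gradx S31 x r = gradx S21 x (q (x, r)) := by
    have hfun : (fun x' => S31 (x', r)) =
        fun x' => S32 (y (x', r), r) + S21 (x', q (x', r)) - ⟪q (x', r), y (x', r)⟫ :=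
      funext fun x' => hS31 x' r
    have hyx : HasFDerivAt (fun x' => y (x', r))
        ((fderiv ℝ y (x, r)).comp (ContinuousLinearMap.inl ℝ _ _)) x :=
      (hy (x, r)).hasFDerivAt.comp x (hasFDerivAt_prodMk_left x r)
    have hqx : HasFDerivAt (fun x' => q (x', r))
        ((fderiv ℝ q (x, r)).comp (ContinuousLinearMap.inl ℝ _ _)) x :=
      (hq (x, r)).hasFDerivAt.comp x (hasFDerivAt_prodMk_left x r)
    have h1 : HasFDerivAt (fun x' => S32 (y (x', r), r))
        ((fderiv ℝ S32 (y (x, r), r)).comp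
          (((fderiv ℝ y (x, r)).comp (ContinuousLinearMap.inl ℝ _ _)).prod 0)) x :=
      ((hS32.differentiable one_ne_zero (y (x, r), r)).hasFDerivAt).comp x
        (hyx.prodMk (hasFDerivAt_const r x))
    have h2 : HasFDerivAt (fun x' => S21 (x', q (x', r)))
        ((fderiv ℝ S21 (x, q (x, r))).comp
          ((ContinuousLinearMap.id ℝ _).prod
            ((fderiv ℝ q (x, r)).comp (ContinuousLinearMap.inl ℝ _ _)))) x :=
      ((hS21.differentiable one_ne_zero (x, q (x, r))).hasFDerivAt).comp x
        ((hasFDerivAt_id x).prodMk hqx)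
    have h3 : HasFDerivAt (fun x' => ⟪q (x', r), y (x', r)⟫)
        ((fderivInnerCLM ℝ (q (x, r), y (x, r))).comp
          (((fderiv ℝ q (x, r)).comp (ContinuousLinearMap.inl ℝ _ _)).prod
            ((fderiv ℝ y (x, r)).comp (ContinuousLinearMap.inl ℝ _ _)))) x :=
      hqx.inner (𝕜 := ℝ) hyx
    have htot := (h1.add h2).sub h3
    have hEq : ((fderiv ℝ S32 (y (x, r), r)).comp
          (((fderiv ℝ y (x, r)).comp (ContinuousLinearMap.inl ℝ _ _)).prod 0) +
        (fderiv ℝ S21 (x, q (x, r))).comp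
          ((ContinuousLinearMap.id ℝ _).prod
            ((fderiv ℝ q (x, r)).comp (ContinuousLinearMap.inl ℝ _ _))) -
        (fderivInnerCLM ℝ (q (x, r), y (x, r))).comp
          (((fderiv ℝ q (x, r)).comp (ContinuousLinearMap.inl ℝ _ _)).prod
            ((fderiv ℝ y (x, r)).comp (ContinuousLinearMap.inl ℝ _ _)))) =
        (InnerProductSpace.toDual ℝ _) (gradx S21 x (q (x, r))) := by
      apply ContinuousLinearMap.ext; intro w
      simp only [ContinuousLinearMap.coe_comp', Function.comp_apply, ContinuousLinearMap.add_apply,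
        ContinuousLinearMap.sub_apply, ContinuousLinearMap.prod_apply,
        ContinuousLinearMap.inl_apply, ContinuousLinearMap.coe_id', id_eq,
        ContinuousLinearMap.zero_apply, fderivInnerCLM_apply, InnerProductSpace.toDual_apply_apply]
      have e1 : fderiv ℝ S32 (y (x, r), r) (fderiv ℝ y (x, r) (w, 0), 0) =
          ⟪q (x, r), fderiv ℝ y (x, r) (w, 0)⟫ := by
        rw [← inner_gradx S32 hS32, ← hsys1 x r]
      have e2 : fderiv ℝ S21 (x, q (x, r)) (w, fderiv ℝ q (x, r) (w, 0)) =
          ⟪gradx S21 x (q (x, r)), w⟫ + ⟪y (x, r), fderiv ℝ q (x, r) (w, 0)⟫ := by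
        have hsplit : ((w, fderiv ℝ q (x, r) (w, 0)) :
            EuclideanSpace ℝ (Fin a) × EuclideanSpace ℝ (Fin b)) =
            (w, 0) + (0, fderiv ℝ q (x, r) (w, 0)) := by simp
        rw [hsplit, map_add, ← inner_gradx S21 hS21, ← inner_gradq S21 hS21, ← hsys2 x r]
      rw [e1, e2, real_inner_comm (fderiv ℝ q (x, r) (w, 0)) (y (x, r))]
      ring
    have hg : HasGradientAt
        (fun x' => S32 (y (x', r), r) + S21 (x', q (x', r)) - ⟪q (x', r), y (x', r)⟫)
        (gradx S21 x (q (x, r))) x :=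
      hasGradientAt_iff_hasFDerivAt.mpr (hEq ▸ htot)
    show gradient (fun x' => S31 (x', r)) x = _
    rw [hfun]
    exact hg.gradient
  have hgr : gradq S31 x r = gradq S32 (y (x, r)) r := by
    have hfun : (fun r' => S31 (x, r')) =
        fun r' => S32 (y (x, r'), r') + S21 (x, q (x, r')) - ⟪q (x, r'), y (x, r')⟫ :=
      funext fun r' => hS31 x r'
    have hyr : HasFDerivAt (fun r' => y (x, r'))
        ((fderiv ℝ y (x, r)).comp (ContinuousLinearMap.inr ℝ _ _)) r :=
      (hy (x, r)).hasFDerivAt.comp r (hasFDerivAt_prodMk_right x r)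
    have hqr : HasFDerivAt (fun r' => q (x, r'))
        ((fderiv ℝ q (x, r)).comp (ContinuousLinearMap.inr ℝ _ _)) r :=
      (hq (x, r)).hasFDerivAt.comp r (hasFDerivAt_prodMk_right x r)
    have h1 : HasFDerivAt (fun r' => S32 (y (x, r'), r'))
        ((fderiv ℝ S32 (y (x, r), r)).comp
          (((fderiv ℝ y (x, r)).comp (ContinuousLinearMap.inr ℝ _ _)).prod
            (ContinuousLinearMap.id ℝ _))) r :=
      HasFDerivAt.comp (f := fun r' => (y (x, r'), r')) (g := S32) r
        ((hS32.differentiable one_ne_zero (y (x, r), r)).hasFDerivAt)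
        (hyr.prodMk (hasFDerivAt_id r))
    have h2 : HasFDerivAt (fun r' => S21 (x, q (x, r')))
        ((fderiv ℝ S21 (x, q (x, r))).comp
          ((0 : EuclideanSpace ℝ (Fin c) →L[ℝ] EuclideanSpace ℝ (Fin a)).prod
            ((fderiv ℝ q (x, r)).comp (ContinuousLinearMap.inr ℝ _ _)))) r :=
      ((hS21.differentiable one_ne_zero (x, q (x, r))).hasFDerivAt).comp r
        ((hasFDerivAt_const x r).prodMk hqr)
    have h3 : HasFDerivAt (fun r' => ⟪q (x, r'), y (x, r')⟫)
        ((fderivInnerCLM ℝ (q (x, r), y (x, r))).comp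
          (((fderiv ℝ q (x, r)).comp (ContinuousLinearMap.inr ℝ _ _)).prod
            ((fderiv ℝ y (x, r)).comp (ContinuousLinearMap.inr ℝ _ _)))) r :=
      hqr.inner (𝕜 := ℝ) hyr
    have htot := (h1.add h2).sub h3
    have hEq : ((fderiv ℝ S32 (y (x, r), r)).comp
          (((fderiv ℝ y (x, r)).comp (ContinuousLinearMap.inr ℝ _ _)).prod
            (ContinuousLinearMap.id ℝ _)) +
        (fderiv ℝ S21 (x, q (x, r))).comp
          ((0 : EuclideanSpace ℝ (Fin c) →L[ℝ] EuclideanSpace ℝ (Fin a)).prod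
            ((fderiv ℝ q (x, r)).comp (ContinuousLinearMap.inr ℝ _ _))) -
        (fderivInnerCLM ℝ (q (x, r), y (x, r))).comp
          (((fderiv ℝ q (x, r)).comp (ContinuousLinearMap.inr ℝ _ _)).prod
            ((fderiv ℝ y (x, r)).comp (ContinuousLinearMap.inr ℝ _ _)))) =
        (InnerProductSpace.toDual ℝ _) (gradq S32 (y (x, r)) r) := by
      apply ContinuousLinearMap.ext; intro w
      simp only [ContinuousLinearMap.coe_comp', Function.comp_apply, ContinuousLinearMap.add_apply,
        ContinuousLinearMap.sub_apply, ContinuousLinearMap.prod_apply,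
        ContinuousLinearMap.inr_apply, ContinuousLinearMap.coe_id', id_eq,
        ContinuousLinearMap.zero_apply, fderivInnerCLM_apply, InnerProductSpace.toDual_apply_apply]
      have e1 : fderiv ℝ S32 (y (x, r), r) (fderiv ℝ y (x, r) (0, w), w) =
          ⟪q (x, r), fderiv ℝ y (x, r) (0, w)⟫ + ⟪gradq S32 (y (x, r)) r, w⟫ := by
        have hsplit : ((fderiv ℝ y (x, r) (0, w), w) :
            EuclideanSpace ℝ (Fin b) × EuclideanSpace ℝ (Fin c)) =
            (fderiv ℝ y (x, r) (0, w), 0) + (0, w) := by simp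
        rw [hsplit, map_add, ← inner_gradx S32 hS32, ← inner_gradq S32 hS32, ← hsys1 x r]
      have e2 : fderiv ℝ S21 (x, q (x, r)) (0, fderiv ℝ q (x, r) (0, w)) =
          ⟪y (x, r), fderiv ℝ q (x, r) (0, w)⟫ := by
        rw [← inner_gradq S21 hS21, ← hsys2 x r]
      rw [e1, e2, real_inner_comm (fderiv ℝ q (x, r) (0, w)) (y (x, r))]
      ring
    have hg : HasGradientAt
        (fun r' => S32 (y (x, r'), r') + S21 (x, q (x, r')) - ⟪q (x, r'), y (x, r')⟫)
        (gradq S32 (y (x, r)) r) r :=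
      hasGradientAt_iff_hasFDerivAt.mpr (hEq ▸ htot)
    show gradient (fun r' => S31 (x, r')) r = _
    rw [hfun]
    exact hg.gradient
  exact ⟨hgx, hgr, ⟨hgr, hsys1 x r⟩, ⟨hsys2 x r, hgx⟩⟩
end

section
/- Let S21 : ℝ^a × ℝ^b → ℝ, S32 : ℝ^b × ℝ^c → ℝ, S43 : ℝ^c × ℝ^d → ℝ be C¹ generating functions. Assume: (i) differentiable maps (y21, q21) : ℝ^a × ℝ^c → ℝ^b × ℝ^b solve the composition system q21 = ∇_y S32(y21, r), y21 = ∇_q S21(x, q21), defining S31(x,r) := S32(y21,r) + S21(x,q21) − ⟨q21, y21⟩, and S31 is C¹; (ii) differentiable maps (z32, r32) : ℝ^b × ℝ^d → ℝ^c × ℝ^c solve r32 = ∇_z S43(z32, s), z32 = ∇_r S32(y, r32), defining S42(y,s) := S43(z32,s) + S32(y,r32) − ⟨r32, z32⟩, and S42 is C¹; (iii) differentiable maps (z', r') : ℝ^a × ℝ^d → ℝ^c × ℝ^c solve r' = ∇_z S43(z', s), z' = ∇_r S31(x, r'), defining the composite S41(x,s) := S43(z',s) + S31(x,r') − ⟨r',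 z'⟩; (iv) differentiable maps (y'', q'') : ℝ^a × ℝ^d → ℝ^b × ℝ^b solve q'' = ∇_y S42(y'', s), y'' = ∇_q S21(x, q''), defining S41'(x,s) := S42(y'',s) + S21(x,q'') − ⟨q'', y''⟩; (v) for each (x,s), the system in unknowns (y,q,z,r) ∈ ℝ^b × ℝ^b × ℝ^c × ℝ^c given by q = ∇_y S32(y,r), y = ∇_q S21(x,q), r = ∇_z S43(z,s), z = ∇_r S32(y,r) has at most one solution. Then S41 = S41' as functions on ℝ^a × ℝ^d; both are equal to S43(z,s) + S32(y,r) + S21(x,q) − ⟨q,y⟩ − ⟨r,z⟩ evaluated at the unique solution (y,q,z,r) of the system in (v). -/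
open scoped RealInnerProductSpace
open InnerProductSpace ContinuousLinearMap

lemma fderiv_split {a b : ℕ} (S : EuclideanSpace ℝ (Fin a) × EuclideanSpace ℝ (Fin b) → ℝ)
    (hS : ContDiff ℝ 1 S) (x : EuclideanSpace ℝ (Fin a)) (q : EuclideanSpace ℝ (Fin b))
    (u : EuclideanSpace ℝ (Fin a)) (w : EuclideanSpace ℝ (Fin b)) :
    fderiv ℝ S (x, q) (u, w) = ⟪gradx S x q, u⟫ + ⟪gradq S x q, w⟫ := by
  have hD : HasFDerivAt S (fderiv ℝ S (x, q)) (x, q) :=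
    ((hS.differentiable one_ne_zero) (x, q)).hasFDerivAt
  have hx : HasFDerivAt (fun x' => S (x', q)) ((fderiv ℝ S (x, q)).comp (inl ℝ _ _)) x :=
    hD.comp x (hasFDerivAt_prodMk_left x q)
  have hq : HasFDerivAt (fun q' => S (x, q')) ((fderiv ℝ S (x, q)).comp (inr ℝ _ _)) q :=
    hD.comp q (hasFDerivAt_prodMk_right x q)
  have hgx : gradx S x q = (toDual ℝ _).symm ((fderiv ℝ S (x, q)).comp (inl ℝ _ _)) :=
    (hx.hasGradientAt).gradient
  have hgq : gradq S x q = (toDual ℝ _).symm ((fderiv ℝ S (x, q)).comp (inr ℝ _ _)) :=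
    (hq.hasGradientAt).gradient
  rw [hgx, hgq, toDual_symm_apply, toDual_symm_apply]
  have : (u, w) = (u, (0 : EuclideanSpace ℝ (Fin b))) + ((0 : EuclideanSpace ℝ (Fin a)), w) := by
    simp
  rw [this, map_add]
  simp [ContinuousLinearMap.comp_apply]

/-- Key chain-rule lemma: partial gradients of a composed generating function. -/
lemma comp_grads {a b c : ℕ}
    (S21 : EuclideanSpace ℝ (Fin a) × EuclideanSpace ℝ (Fin b) → ℝ)
    (S32 : EuclideanSpace ℝ (Fin b) × EuclideanSpace ℝ (Fin c) → ℝ)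
    (h21 : ContDiff ℝ 1 S21) (h32 : ContDiff ℝ 1 S32)
    (y q : EuclideanSpace ℝ (Fin a) × EuclideanSpace ℝ (Fin c) → EuclideanSpace ℝ (Fin b))
    (hy : Differentiable ℝ y) (hq : Differentiable ℝ q)
    (ha : ∀ x r, q (x, r) = gradx S32 (y (x, r)) r)
    (hb : ∀ x r, y (x, r) = gradq S21 x (q (x, r)))
    (T : EuclideanSpace ℝ (Fin a) × EuclideanSpace ℝ (Fin c) → ℝ)
    (hT : ∀ x r, T (x, r) = S32 (y (x, r), r) + S21 (x, q (x, r)) - ⟪q (x, r), y (x, r)⟫)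
    (x : EuclideanSpace ℝ (Fin a)) (r : EuclideanSpace ℝ (Fin c)) :
    gradq T x r = gradq S32 (y (x, r)) r ∧ gradx T x r = gradx S21 x (q (x, r)) := by
  constructor
  · -- gradient in r
    have hpair : HasFDerivAt (fun r' : EuclideanSpace ℝ (Fin c) => (x, r')) (inr ℝ _ _) r :=
      hasFDerivAt_prodMk_right x r
    set DY := (fderiv ℝ y (x, r)).comp (inr ℝ _ _) with hDY
    set DQ := (fderiv ℝ q (x, r)).comp (inr ℝ _ _) with hDQ
    have hY : HasFDerivAt (fun r' => y (x, r')) DY r := (hy (x, r)).hasFDerivAt.comp r hpair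
    have hQ : HasFDerivAt (fun r' => q (x, r')) DQ r := (hq (x, r)).hasFDerivAt.comp r hpair
    have h1 : HasFDerivAt (fun r' => S32 (y (x, r'), r'))
        ((fderiv ℝ S32 (y (x, r), r)).comp (DY.prod (ContinuousLinearMap.id ℝ _))) r :=
      ((h32.differentiable one_ne_zero) _).hasFDerivAt.comp r (hY.prodMk (hasFDerivAt_id r))
    have h2 : HasFDerivAt (fun r' => S21 (x, q (x, r')))
        ((fderiv ℝ S21 (x, q (x, r))).comp ((0 : _ →L[ℝ] EuclideanSpace ℝ (Fin a)).prod DQ)) r :=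
      ((h21.differentiable one_ne_zero) _).hasFDerivAt.comp r ((hasFDerivAt_const x r).prodMk hQ)
    have h3 : HasFDerivAt (fun r' => ⟪q (x, r'), y (x, r')⟫)
        ((fderivInnerCLM ℝ (q (x, r), y (x, r))).comp (DQ.prod DY)) r := hQ.inner ℝ hY
    have htot := (h1.add h2).sub h3
    have hfun : (fun r' => T (x, r')) =
        fun r' => S32 (y (x, r'), r') + S21 (x, q (x, r')) - ⟪q (x, r'), y (x, r')⟫ :=
      funext fun r' => hT x r'
    have hgrad : HasGradientAt (fun r' => T (x, r')) (gradq S32 (y (x, r)) r) r := by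
      rw [hfun, hasGradientAt_iff_hasFDerivAt]
      refine htot.congr_fderiv (Eq.symm ?_)
      ext v
      simp only [toDual_apply_apply, ContinuousLinearMap.comp_apply, ContinuousLinearMap.add_apply,
        ContinuousLinearMap.sub_apply, ContinuousLinearMap.prod_apply, fderivInnerCLM_apply,
        ContinuousLinearMap.coe_id', id_eq, ContinuousLinearMap.zero_apply]
      rw [fderiv_split S32 h32, fderiv_split S21 h21, ← ha, ← hb]
      simp [real_inner_comm (DQ v) (y (x,r))]
    exact hgrad.gradient
  · -- gradient in x
    have hpair : HasFDerivAt (fun x' : EuclideanSpace ℝ (Fin a) => (x', r)) (inl ℝ _ _) x :=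
      hasFDerivAt_prodMk_left x r
    set DY := (fderiv ℝ y (x, r)).comp (inl ℝ _ _) with hDY
    set DQ := (fderiv ℝ q (x, r)).comp (inl ℝ _ _) with hDQ
    have hY : HasFDerivAt (fun x' => y (x', r)) DY x := (hy (x, r)).hasFDerivAt.comp x hpair
    have hQ : HasFDerivAt (fun x' => q (x', r)) DQ x := (hq (x, r)).hasFDerivAt.comp x hpair
    have h1 : HasFDerivAt (fun x' => S32 (y (x', r), r))
        ((fderiv ℝ S32 (y (x, r), r)).comp (DY.prod (0 : _ →L[ℝ] EuclideanSpace ℝ (Fin c)))) x :=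
      ((h32.differentiable one_ne_zero) _).hasFDerivAt.comp x (hY.prodMk (hasFDerivAt_const r x))
    have h2 : HasFDerivAt (fun x' => S21 (x', q (x', r)))
        ((fderiv ℝ S21 (x, q (x, r))).comp ((ContinuousLinearMap.id ℝ _).prod DQ)) x :=
      ((h21.differentiable one_ne_zero) _).hasFDerivAt.comp x ((hasFDerivAt_id x).prodMk hQ)
    have h3 : HasFDerivAt (fun x' => ⟪q (x', r), y (x', r)⟫)
        ((fderivInnerCLM ℝ (q (x, r), y (x, r))).comp (DQ.prod DY)) x := hQ.inner ℝ hY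
    have htot := (h1.add h2).sub h3
    have hfun : (fun x' => T (x', r)) =
        fun x' => S32 (y (x', r), r) + S21 (x', q (x', r)) - ⟪q (x', r), y (x', r)⟫ :=
      funext fun x' => hT x' r
    have hgrad : HasGradientAt (fun x' => T (x', r)) (gradx S21 x (q (x, r))) x := by
      rw [hfun, hasGradientAt_iff_hasFDerivAt]
      refine htot.congr_fderiv (Eq.symm ?_)
      ext v
      simp only [toDual_apply_apply, ContinuousLinearMap.comp_apply, ContinuousLinearMap.add_apply,
        ContinuousLinearMap.sub_apply, ContinuousLinearMap.prod_apply, fderivInnerCLM_apply,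
        ContinuousLinearMap.coe_id', id_eq, ContinuousLinearMap.zero_apply]
      rw [fderiv_split S32 h32, fderiv_split S21 h21, ← ha, ← hb]
      simp [real_inner_comm (DQ v) (y (x,r))]
    exact hgrad.gradient

/-- Associativity of the composition of thick morphisms: composing the generating
functions `S21, S32, S43` in either order yields the same generating function
`S41 = S41'`, equal to `S43 + S32 + S21 − ⟨q,y⟩ − ⟨r,z⟩` at the unique solution of the
full coupled system. -/
theorem thick_composition_assoc {a b c d : ℕ}
    (S21 : EuclideanSpace ℝ (Fin a) × EuclideanSpace ℝ (Fin b) → ℝ)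
    (S32 : EuclideanSpace ℝ (Fin b) × EuclideanSpace ℝ (Fin c) → ℝ)
    (S43 : EuclideanSpace ℝ (Fin c) × EuclideanSpace ℝ (Fin d) → ℝ)
    (hS21 : ContDiff ℝ 1 S21) (hS32 : ContDiff ℝ 1 S32) (hS43 : ContDiff ℝ 1 S43)
    -- (i) the composite S31 = S32 ∘ S21
    (y21 q21 : EuclideanSpace ℝ (Fin a) × EuclideanSpace ℝ (Fin c) → EuclideanSpace ℝ (Fin b))
    (hy21 : Differentiable ℝ y21) (hq21 : Differentiable ℝ q21)
    (hsys21a : ∀ x r, q21 (x, r) = gradx S32 (y21 (x, r)) r)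
    (hsys21b : ∀ x r, y21 (x, r) = gradq S21 x (q21 (x, r)))
    (S31 : EuclideanSpace ℝ (Fin a) × EuclideanSpace ℝ (Fin c) → ℝ)
    (hS31 : ∀ x r, S31 (x, r) =
      S32 (y21 (x, r), r) + S21 (x, q21 (x, r)) - ⟪q21 (x, r), y21 (x, r)⟫)
    (hS31smooth : ContDiff ℝ 1 S31)
    -- (ii) the composite S42 = S43 ∘ S32
    (z32 r32 : EuclideanSpace ℝ (Fin b) × EuclideanSpace ℝ (Fin d) → EuclideanSpace ℝ (Fin c))
    (hz32 : Differentiable ℝ z32) (hr32 : Differentiable ℝ r32)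
    (hsys32a : ∀ y s, r32 (y, s) = gradx S43 (z32 (y, s)) s)
    (hsys32b : ∀ y s, z32 (y, s) = gradq S32 y (r32 (y, s)))
    (S42 : EuclideanSpace ℝ (Fin b) × EuclideanSpace ℝ (Fin d) → ℝ)
    (hS42 : ∀ y s, S42 (y, s) =
      S43 (z32 (y, s), s) + S32 (y, r32 (y, s)) - ⟪r32 (y, s), z32 (y, s)⟫)
    (hS42smooth : ContDiff ℝ 1 S42)
    -- (iii) the composite S41 = S43 ∘ S31
    (z' r' : EuclideanSpace ℝ (Fin a) × EuclideanSpace ℝ (Fin d) → EuclideanSpace ℝ (Fin c))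
    (hz' : Differentiable ℝ z') (hr' : Differentiable ℝ r')
    (hsysa : ∀ x s, r' (x, s) = gradx S43 (z' (x, s)) s)
    (hsysb : ∀ x s, z' (x, s) = gradq S31 x (r' (x, s)))
    (S41 : EuclideanSpace ℝ (Fin a) × EuclideanSpace ℝ (Fin d) → ℝ)
    (hS41 : ∀ x s, S41 (x, s) =
      S43 (z' (x, s), s) + S31 (x, r' (x, s)) - ⟪r' (x, s), z' (x, s)⟫)
    -- (iv) the composite S41' = S42 ∘ S21
    (y'' q'' : EuclideanSpace ℝ (Fin a) × EuclideanSpace ℝ (Fin d) → EuclideanSpace ℝ (Fin b))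
    (hy'' : Differentiable ℝ y'') (hq'' : Differentiable ℝ q'')
    (hsysc : ∀ x s, q'' (x, s) = gradx S42 (y'' (x, s)) s)
    (hsysd : ∀ x s, y'' (x, s) = gradq S21 x (q'' (x, s)))
    (S41' : EuclideanSpace ℝ (Fin a) × EuclideanSpace ℝ (Fin d) → ℝ)
    (hS41' : ∀ x s, S41' (x, s) =
      S42 (y'' (x, s), s) + S21 (x, q'' (x, s)) - ⟪q'' (x, s), y'' (x, s)⟫)
    -- (v) uniqueness of solutions of the full coupled system
    (huniq : ∀ x s
      (y q : EuclideanSpace ℝ (Fin b)) (z r : EuclideanSpace ℝ (Fin c))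
      (y₁ q₁ : EuclideanSpace ℝ (Fin b)) (z₁ r₁ : EuclideanSpace ℝ (Fin c)),
      (q = gradx S32 y r ∧ y = gradq S21 x q ∧ r = gradx S43 z s ∧ z = gradq S32 y r) →
      (q₁ = gradx S32 y₁ r₁ ∧ y₁ = gradq S21 x q₁ ∧ r₁ = gradx S43 z₁ s ∧
        z₁ = gradq S32 y₁ r₁) →
      (y, q, z, r) = (y₁, q₁, z₁, r₁)) :
    S41 = S41' ∧
    ∀ x s (y q : EuclideanSpace ℝ (Fin b)) (z r : EuclideanSpace ℝ (Fin c)),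
      (q = gradx S32 y r ∧ y = gradq S21 x q ∧ r = gradx S43 z s ∧ z = gradq S32 y r) →
      S41 (x, s) = S43 (z, s) + S32 (y, r) + S21 (x, q) - ⟪q, y⟫ - ⟪r, z⟫ ∧
      S41' (x, s) = S43 (z, s) + S32 (y, r) + S21 (x, q) - ⟪q, y⟫ - ⟪r, z⟫ := by
  have key31 := fun x r =>
    comp_grads S21 S32 hS21 hS32 y21 q21 hy21 hq21 hsys21a hsys21b S31 hS31 x r
  have key42 := fun y s =>
    comp_grads S32 S43 hS32 hS43 z32 r32 hz32 hr32 hsys32a hsys32b S42 hS42 y s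
  have hsolA : ∀ x s,
      q21 (x, r' (x, s)) = gradx S32 (y21 (x, r' (x, s))) (r' (x, s)) ∧
      y21 (x, r' (x, s)) = gradq S21 x (q21 (x, r' (x, s))) ∧
      r' (x, s) = gradx S43 (z' (x, s)) s ∧
      z' (x, s) = gradq S32 (y21 (x, r' (x, s))) (r' (x, s)) := fun x s =>
    ⟨hsys21a x _, hsys21b x _, hsysa x s, by rw [hsysb x s, (key31 x (r' (x, s))).1]⟩
  have hsolB : ∀ x s,
      q'' (x, s) = gradx S32 (y'' (x, s)) (r32 (y'' (x, s), s)) ∧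
      y'' (x, s) = gradq S21 x (q'' (x, s)) ∧
      r32 (y'' (x, s), s) = gradx S43 (z32 (y'' (x, s), s)) s ∧
      z32 (y'' (x, s), s) = gradq S32 (y'' (x, s)) (r32 (y'' (x, s), s)) := fun x s =>
    ⟨by rw [hsysc x s, (key42 (y'' (x, s)) s).2], hsysd x s, hsys32a _ s, hsys32b _ s⟩
  have hvalA : ∀ x s, S41 (x, s) =
      S43 (z' (x, s), s) + S32 (y21 (x, r' (x, s)), r' (x, s)) + S21 (x, q21 (x, r' (x, s)))
        - ⟪q21 (x, r' (x, s)), y21 (x, r' (x, s))⟫ - ⟪r' (x, s), z' (x, s)⟫ := by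
    intro x s; rw [hS41, hS31]; ring
  have hvalB : ∀ x s, S41' (x, s) =
      S43 (z32 (y'' (x, s), s), s) + S32 (y'' (x, s), r32 (y'' (x, s), s)) + S21 (x, q'' (x, s))
        - ⟪q'' (x, s), y'' (x, s)⟫ - ⟪r32 (y'' (x, s), s), z32 (y'' (x, s), s)⟫ := by
    intro x s; rw [hS41', hS42]; ring
  have main : ∀ x s (y q : EuclideanSpace ℝ (Fin b)) (z r : EuclideanSpace ℝ (Fin c)),
      (q = gradx S32 y r ∧ y = gradq S21 x q ∧ r = gradx S43 z s ∧ z = gradq S32 y r) →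
      S41 (x, s) = S43 (z, s) + S32 (y, r) + S21 (x, q) - ⟪q, y⟫ - ⟪r, z⟫ ∧
      S41' (x, s) = S43 (z, s) + S32 (y, r) + S21 (x, q) - ⟪q, y⟫ - ⟪r, z⟫ := by
    intro x s y q z r hsol
    constructor
    · have hA := huniq x s y q z r (y21 (x, r' (x, s))) (q21 (x, r' (x, s))) (z' (x, s))
        (r' (x, s)) hsol (hsolA x s)
      simp only [Prod.mk.injEq] at hA
      obtain ⟨h1, h2, h3, h4⟩ := hA
      subst h1; subst h2; subst h3; subst h4
      exact hvalA x s
    · have hB := huniq x s y q z r (y'' (x, s)) (q'' (x, s)) (z32 (y'' (x, s), s))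
        (r32 (y'' (x, s), s)) hsol (hsolB x s)
      simp only [Prod.mk.injEq] at hB
      obtain ⟨h1, h2, h3, h4⟩ := hB
      subst h1; subst h2; subst h3; subst h4
      exact hvalB x s
  refine ⟨funext fun p => ?_, main⟩
  obtain ⟨x, s⟩ := p
  obtain ⟨e1, e2⟩ := main x s _ _ _ _ ⟨(hsolA x s).1, (hsolA x s).2.1, (hsolA x s).2.2.1,
    (hsolA x s).2.2.2⟩
  exact e1.trans e2.symm
end

section
/- Let V1, V2, V3 be finite-dimensional real vector spaces, Φ21 : V1 → V2 any map, and Φ32 : V2 → V3 a differentiable map. Consider the adjoint generating functions S_A : V3* × V2 → ℝ, S_A(γ, w) := γ(Φ32 w) (for the adjoint thick morphism Φ32* : V3* ⇢ V2*) and S_B : V2* × V1 → ℝ, S_B(β, v) := β(Φ21 v) (for Φ21* : V2* ⇢ V1*). Then for each (γ, v) ∈ V3* × V1, the pair w := Φ21 v ∈ V2, β := (DΦ32(Φ21 v))ᵀ γ = γ ∘ DΦ32(Φ21 v) ∈ V2* solves the composition system w = D_β S_B(β, v) (under W** ≅ W) and β = D_w S_A(γ, w), and the resulting composite generating function S_A(γ,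 w) + S_B(β, v) − β(w) equals γ(Φ32(Φ21 v)), which is exactly the adjoint generating function of the composite map Φ32 ∘ Φ21 : V1 → V3. Hence (Φ32 ∘ Φ21)* = Φ21* ∘ Φ32* as thick morphisms V3* ⇢ V1*. -/
open NormedSpace

/-- The adjoint construction reverses composition: for `Φ21 : V1 → V2` arbitrary and
`Φ32 : V2 → V3` differentiable, `w = Φ21 v` and `β = γ ∘ DΦ32(Φ21 v)` solve the
composition system for the adjoint thick morphisms, and the composite generating
function `S_A + S_B − β(w)` equals the adjoint generating function `γ(Φ32(Φ21 v))` of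
`Φ32 ∘ Φ21`, i.e. `(Φ32 ∘ Φ21)* = Φ21* ∘ Φ32*`. -/
theorem adjoint_reverses_composition
    {V1 V2 V3 : Type*}
    [NormedAddCommGroup V1] [NormedSpace ℝ V1] [FiniteDimensional ℝ V1]
    [NormedAddCommGroup V2] [NormedSpace ℝ V2] [FiniteDimensional ℝ V2]
    [NormedAddCommGroup V3] [NormedSpace ℝ V3] [FiniteDimensional ℝ V3]
    (Φ21 : V1 → V2) (Φ32 : V2 → V3) (hΦ32 : Differentiable ℝ Φ32)
    (SA : StrongDual ℝ V3 × V2 → ℝ) (hSA : ∀ γ w, SA (γ, w) = γ (Φ32 w))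
    (SB : StrongDual ℝ V2 × V1 → ℝ) (hSB : ∀ β v, SB (β, v) = β (Φ21 v)) :
    ∀ (γ : StrongDual ℝ V3) (v : V1),
      -- w := Φ21 v and β := γ ∘ DΦ32(Φ21 v) solve the composition system:
      inclusionInDoubleDual ℝ V2 (Φ21 v) =
        fderiv ℝ (fun β' : StrongDual ℝ V2 => SB (β', v)) (γ.comp (fderiv ℝ Φ32 (Φ21 v))) ∧
      γ.comp (fderiv ℝ Φ32 (Φ21 v)) =
        fderiv ℝ (fun w' : V2 => SA (γ, w')) (Φ21 v) ∧
      -- the composite generating function is the adjoint generating function of Φ32 ∘ Φ21: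
      SA (γ, Φ21 v) + SB (γ.comp (fderiv ℝ Φ32 (Φ21 v)), v) -
          (γ.comp (fderiv ℝ Φ32 (Φ21 v))) (Φ21 v) =
        γ ((Φ32 ∘ Φ21) v) := by
  intro γ v
  refine ⟨?_, ?_, ?_⟩
  · have h1 : (fun β' : StrongDual ℝ V2 => SB (β', v)) =
        ⇑(inclusionInDoubleDual ℝ V2 (Φ21 v)) := by
      funext β'; rw [hSB]; rfl
    rw [h1, ContinuousLinearMap.fderiv]
  · have h1 : (fun w' : V2 => SA (γ, w')) = γ ∘ Φ32 := by
      funext w'; rw [hSA]; rfl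
    rw [h1]
    exact (γ.hasFDerivAt.comp _ (hΦ32 _).hasFDerivAt).fderiv.symm
  · simp [hSA, hSB]
end

section
/- Let V and W be finite-dimensional real vector spaces and Φ : V → W a differentiable map. Fix v₀ ∈ V and let f : V* → ℝ be the linear function f(α) := α(v₀). Consider the adjoint thick morphism Φ* : W* ⇢ V* with generating function S*(β, v) := β(Φ v) on W* × V. Then for every β ∈ W*, the pair v := v₀, α := (DΦ(v₀))ᵀ β = β ∘ DΦ(v₀) ∈ V* solves the pullback system v = ∇f(α) (the gradient of the linear function f, identified with v₀ ∈ V ≅ V**) and α = D_v S*(β, v), and the pushforward value Φ_*[f](β) := f(α) + S*(β, v) − α(v) equals β(Φ(v₀)). Hence the nonlinear pushforward Φ_* sends the linear function α ↦ α(v₀) on V* to the linear function β ↦ β(Φ(v₀)) on W*; on fiberwise-linear functions it coincides with the ordinary pushforward v₀ ↦ Φ(v₀). -/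
open NormedSpace

/-- On fiberwise-linear functions, the nonlinear pushforward along the adjoint thick
morphism of a differentiable map `Φ : V → W` coincides with the ordinary pushforward:
for `f(α) = α(v₀)` on `V*`, the pair `v := v₀`, `α := β ∘ DΦ(v₀)` solves the pullback
system, and the pushforward value `f(α) + S*(β,v) − α(v)` equals `β(Φ(v₀))`. -/
theorem pushforward_of_linear_function
    {V W : Type*}
    [NormedAddCommGroup V] [NormedSpace ℝ V] [FiniteDimensional ℝ V]
    [NormedAddCommGroup W] [NormedSpace ℝ W] [FiniteDimensional ℝ W]
    (Φ : V → W) (hΦ : Differentiable ℝ Φ) (v₀ : V)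
    (f : StrongDual ℝ V → ℝ) (hf : ∀ α, f α = α v₀)
    (Sstar : StrongDual ℝ W × V → ℝ) (hSstar : ∀ β v, Sstar (β, v) = β (Φ v)) :
    ∀ β : StrongDual ℝ W,
      -- v := v₀ solves v = ∇f(α): the derivative of f is the evaluation at v₀ ∈ V ≅ V**
      fderiv ℝ f (β.comp (fderiv ℝ Φ v₀)) = inclusionInDoubleDual ℝ V v₀ ∧
      -- α := β ∘ DΦ(v₀) solves α = D_v S*(β, v) at v = v₀
      β.comp (fderiv ℝ Φ v₀) = fderiv ℝ (fun v' : V => Sstar (β, v')) v₀ ∧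
      -- the pushforward value is β(Φ(v₀))
      f (β.comp (fderiv ℝ Φ v₀)) + Sstar (β, v₀) - (β.comp (fderiv ℝ Φ v₀)) v₀ =
        β (Φ v₀) := by
  intro β
  have hfeq : f = fun α => (inclusionInDoubleDual ℝ V v₀) α := by
    funext α; simp [hf α, inclusionInDoubleDual]
  refine ⟨?_, ?_, ?_⟩
  · rw [hfeq]
    exact (inclusionInDoubleDual ℝ V v₀).fderiv
  · have h1 : (fun v' : V => Sstar (β, v')) = fun v' => β (Φ v') := by
      funext v'; exact hSstar β v'
    rw [h1]
    have := (β.hasFDerivAt.comp v₀ (hΦ v₀).hasFDerivAt).fderiv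
    rw [← this]; rfl
  · rw [hf, hSstar]
    simp
end

section
/- Let S : ℝ^a × ℝ^b → ℝ be C¹ and g : ℝ^b → ℝ be C². Suppose y : ℝ^a → ℝ^b is a differentiable map satisfying y(x) = ∇_q S(x, ∇g(y(x))) for all x ∈ ℝ^a. Define the pullback f : ℝ^a → ℝ by f(x) := g(y(x)) + S(x, ∇g(y(x))) − ⟨∇g(y(x)), y(x)⟩. Then f is differentiable and its gradient is ∇f(x) = ∇_x S(x, ∇g(y(x))) for all x. In particular, for every x the point (y(x), ∇g(y(x)); x, ∇f(x)) lies on the relation Φ_S, i.e., the differentials df(x) and dg(y(x)) are related by the canonical relation defined by S. -/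
open scoped RealInnerProductSpace


/-- `⟪gradient f x, v⟫ = fderiv f x v`. -/
lemma inner_gradient_eq {F' : Type*} [NormedAddCommGroup F'] [InnerProductSpace ℝ F']
    [CompleteSpace F'] (f : F' → ℝ) (x v : F') :
    ⟪gradient f x, v⟫ = fderiv ℝ f x v := by
  rw [gradient, InnerProductSpace.toDual_symm_apply]

/-- The nonlinear pullback `f = Φ*[g]` along the thick morphism with generating function
`S` is differentiable with `∇f(x) = ∇_x S(x, ∇g(y(x)))`; in particular the differentials
`df(x)` and `dg(y(x))` are related by the canonical relation `Φ_S`. -/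
theorem thick_pullback_gradient {a b : ℕ}
    (S : EuclideanSpace ℝ (Fin a) × EuclideanSpace ℝ (Fin b) → ℝ) (hS : ContDiff ℝ 1 S)
    (g : EuclideanSpace ℝ (Fin b) → ℝ) (hg : ContDiff ℝ 2 g)
    (y : EuclideanSpace ℝ (Fin a) → EuclideanSpace ℝ (Fin b)) (hy : Differentiable ℝ y)
    (hyeq : ∀ x, y x = gradq S x (gradient g (y x)))
    (f : EuclideanSpace ℝ (Fin a) → ℝ)
    (hf : ∀ x, f x = g (y x) + S (x, gradient g (y x)) - ⟪gradient g (y x), y x⟫) :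
    Differentiable ℝ f ∧
    ∀ x, gradient f x = gradx S x (gradient g (y x)) ∧
      ((y x, gradient g (y x)), (x, gradient f x)) ∈ thickRel S := by
  have hSd : Differentiable ℝ S := hS.differentiable one_ne_zero
  have hgd : Differentiable ℝ g := hg.differentiable two_ne_zero
  set q : (EuclideanSpace ℝ (Fin a)) → (EuclideanSpace ℝ (Fin b)) := fun x => gradient g (y x) with hq_def
  have hgrad_diff : Differentiable ℝ (gradient g) := by
    have h1 : Differentiable ℝ (fderiv ℝ g) :=
      (hg.fderiv_right (m := 1) le_rfl).differentiable one_ne_zero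
    have : gradient g = fun z =>
        (InnerProductSpace.toDual ℝ (EuclideanSpace ℝ (Fin b))).symm (fderiv ℝ g z) := rfl
    rw [this]
    exact (InnerProductSpace.toDual ℝ (EuclideanSpace ℝ (Fin b))).symm.toContinuousLinearEquiv.differentiable.comp h1
  have hq_diff : Differentiable ℝ q := hgrad_diff.comp hy
  -- the key derivative computation at each point
  have key : ∀ x, HasFDerivAt f
      ((fderiv ℝ S (x, q x)).comp (ContinuousLinearMap.inl ℝ (EuclideanSpace ℝ (Fin a)) (EuclideanSpace ℝ (Fin b)))) x := by
    intro x
    set A := fderiv ℝ S (x, q x) with hA_def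
    have hA : HasFDerivAt S A (x, q x) := (hSd (x, q x)).hasFDerivAt
    set Dy := fderiv ℝ y x
    set Dq := fderiv ℝ q x
    have h1 : HasFDerivAt (fun x' => g (y x')) ((fderiv ℝ g (y x)).comp Dy) x :=
      (hgd (y x)).hasFDerivAt.comp x (hy x).hasFDerivAt
    have hpair : HasFDerivAt (fun x' : (EuclideanSpace ℝ (Fin a)) => (x', q x'))
        ((ContinuousLinearMap.id ℝ (EuclideanSpace ℝ (Fin a))).prod Dq) x :=
      HasFDerivAt.prodMk (hasFDerivAt_id x) (hq_diff x).hasFDerivAt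
    have h2 : HasFDerivAt (fun x' => S (x', q x'))
        (A.comp ((ContinuousLinearMap.id ℝ (EuclideanSpace ℝ (Fin a))).prod Dq)) x := hA.comp x hpair
    have h3 : HasFDerivAt (fun x' => ⟪q x', y x'⟫)
        ((fderivInnerCLM ℝ (q x, y x)).comp (Dq.prod Dy)) x :=
      (hq_diff x).hasFDerivAt.inner ℝ (hy x).hasFDerivAt
    have hsum : HasFDerivAt (fun x' => g (y x') + S (x', q x') - ⟪q x', y x'⟫)
        ((fderiv ℝ g (y x)).comp Dy + A.comp ((ContinuousLinearMap.id ℝ (EuclideanSpace ℝ (Fin a))).prod Dq)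
          - (fderivInnerCLM ℝ (q x, y x)).comp (Dq.prod Dy)) x := (h1.add h2).sub h3
    have hfe : f = fun x' => g (y x') + S (x', q x') - ⟪q x', y x'⟫ := funext hf
    rw [← hfe] at hsum
    convert hsum using 1
    -- show the linear maps agree
    ext v
    have hpartq : HasFDerivAt (fun q' : (EuclideanSpace ℝ (Fin b)) => S (x, q'))
        (A.comp (ContinuousLinearMap.inr ℝ (EuclideanSpace ℝ (Fin a)) (EuclideanSpace ℝ (Fin b)))) (q x) := by
      have : HasFDerivAt (fun q' : (EuclideanSpace ℝ (Fin b)) => ((x : (EuclideanSpace ℝ (Fin a))), q')) (ContinuousLinearMap.inr ℝ (EuclideanSpace ℝ (Fin a)) (EuclideanSpace ℝ (Fin b))) (q x) :=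
        HasFDerivAt.prodMk (hasFDerivAt_const x (q x)) (hasFDerivAt_id (q x))
      exact hA.comp (q x) this
    have hgq : ∀ w, ⟪y x, w⟫ = A (0, w) := by
      intro w
      rw [hyeq x]
      have : gradq S x (q x) = gradient (fun q' : (EuclideanSpace ℝ (Fin b)) => S (x, q')) (q x) := rfl
      rw [show gradient g (y x) = q x from rfl, this, inner_gradient_eq, hpartq.fderiv]
      rfl
    have hL1 : (fderiv ℝ g (y x)) (Dy v) = ⟪q x, Dy v⟫ := (inner_gradient_eq g (y x) (Dy v)).symm
    have hsplit : A (v, Dq v) = A (v, 0) + A (0, Dq v) := by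
      rw [← map_add]; norm_num
    simp only [ContinuousLinearMap.sub_apply, ContinuousLinearMap.add_apply,
      ContinuousLinearMap.comp_apply, ContinuousLinearMap.inl_apply,
      ContinuousLinearMap.prod_apply, ContinuousLinearMap.id_apply,
      fderivInnerCLM_apply]
    rw [hL1, hsplit, ← hgq (Dq v)]
    have : ⟪y x, Dq v⟫ = ⟪Dq v, y x⟫ := real_inner_comm _ _
    rw [this]
    ring
  have hdiff : Differentiable ℝ f := fun x => (key x).differentiableAt
  refine ⟨hdiff, fun x => ?_⟩
  have hpartx : HasFDerivAt (fun x' : (EuclideanSpace ℝ (Fin a)) => S (x', q x))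
      ((fderiv ℝ S (x, q x)).comp (ContinuousLinearMap.inl ℝ (EuclideanSpace ℝ (Fin a)) (EuclideanSpace ℝ (Fin b)))) x := by
    have : HasFDerivAt (fun x' : (EuclideanSpace ℝ (Fin a)) => (x', q x)) (ContinuousLinearMap.inl ℝ (EuclideanSpace ℝ (Fin a)) (EuclideanSpace ℝ (Fin b))) x :=
      HasFDerivAt.prodMk (hasFDerivAt_id x) (hasFDerivAt_const (q x) x)
    exact ((hSd (x, q x)).hasFDerivAt).comp x this
  have hgradf : gradient f x = gradx S x (q x) := by
    unfold gradx
    rw [gradient, gradient, (key x).fderiv, hpartx.fderiv]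
  exact ⟨hgradf, hyeq x, hgradf⟩
end

section
/- Let φ : ℝ^a → ℝ^b be a C¹ map and define the generating function S : ℝ^a × ℝ^b → ℝ by S(x, q) := ⟨q, φ(x)⟩. Then: (1) the associated relation Φ_S = {(y, q; x, p) : y = ∇_q S(x,q), p = ∇_x S(x,q)} equals {((φ(x), q), (x, Dφ(x)ᵀ q)) : x ∈ ℝ^a, q ∈ ℝ^b}, the cotangent lift of the graph of φ; and (2) for every differentiable g : ℝ^b → ℝ, the pair y := φ(x), q := ∇g(φ(x)) solves the pullback system q = ∇g(y), y = ∇_q S(x, q), and the pullback value is Φ*[g](x) = g(y) + S(x,q) − ⟨q, y⟩ = g(φ(x)). Hence ordinary smooth maps embed into thick morphisms, with the nonlinear pullback reducing to the ordinary pullback g ↦ g ∘ φ. -/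
open scoped RealInnerProductSpace

section Aux

open InnerProductSpace

variable {F G : Type*} [NormedAddCommGroup F] [InnerProductSpace ℝ F] [CompleteSpace F]
  [NormedAddCommGroup G] [InnerProductSpace ℝ G] [CompleteSpace G]

lemma grad_inner_const (v q : F) : gradient (fun q' : F => ⟪q', v⟫) q = v := by
  have h : HasGradientAt (fun q' : F => ⟪q', v⟫) v q := by
    rw [hasGradientAt_iff_hasFDerivAt]
    have : (fun q' : F => ⟪q', v⟫) = fun q' => (toDual ℝ F v) q' := by
      ext q'; simp [real_inner_comm]
    rw [this]
    exact (toDual ℝ F v).hasFDerivAt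
  exact h.gradient

lemma grad_inner_comp (φ : F → G) (x : F) (q : G) (hφ : DifferentiableAt ℝ φ x) :
    gradient (fun x' : F => ⟪q, φ x'⟫) x =
      ContinuousLinearMap.adjoint (fderiv ℝ φ x) q := by
  have h : HasGradientAt (fun x' : F => ⟪q, φ x'⟫)
      (ContinuousLinearMap.adjoint (fderiv ℝ φ x) q) x := by
    rw [hasGradientAt_iff_hasFDerivAt]
    have h2 : HasFDerivAt (fun x' : F => ⟪q, φ x'⟫)
        ((innerSL ℝ q).comp (fderiv ℝ φ x)) x :=
      (innerSL ℝ q).hasFDerivAt.comp x hφ.hasFDerivAt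
    refine h2.congr_fderiv ?_
    ext v
    simp [ContinuousLinearMap.adjoint_inner_left]
  exact h.gradient

end Aux

/-- Ordinary smooth maps embed into thick morphisms: for `S(x,q) = ⟨q, φ(x)⟩` the
relation `Φ_S` is the cotangent lift of the graph of `φ`, and the nonlinear pullback is
the ordinary pullback `g ↦ g ∘ φ`. -/
theorem ordinary_map_as_thick_morphism {a b : ℕ}
    (φ : EuclideanSpace ℝ (Fin a) → EuclideanSpace ℝ (Fin b)) (hφ : ContDiff ℝ 1 φ)
    (S : EuclideanSpace ℝ (Fin a) × EuclideanSpace ℝ (Fin b) → ℝ)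
    (hS : ∀ x q, S (x, q) = ⟪q, φ x⟫) :
    thickRel S =
      {z : (EuclideanSpace ℝ (Fin b) × EuclideanSpace ℝ (Fin b)) ×
          (EuclideanSpace ℝ (Fin a) × EuclideanSpace ℝ (Fin a)) |
        ∃ (x : EuclideanSpace ℝ (Fin a)) (q : EuclideanSpace ℝ (Fin b)),
          z = ((φ x, q), (x, ContinuousLinearMap.adjoint (fderiv ℝ φ x) q))} ∧
    ∀ (g : EuclideanSpace ℝ (Fin b) → ℝ), Differentiable ℝ g →
      ∀ x : EuclideanSpace ℝ (Fin a),
        -- y := φ(x), q := ∇g(φ(x)) solve the pullback system: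
        gradient g (φ x) = gradient g (φ x) ∧
        φ x = gradq S x (gradient g (φ x)) ∧
        -- and the pullback value is the ordinary pullback g(φ(x)):
        g (φ x) + S (x, gradient g (φ x)) - ⟪gradient g (φ x), φ x⟫ = g (φ x) := by
  have hgq : ∀ x q, gradq S x q = φ x := by
    intro x q
    unfold gradq
    have : (fun q' => S (x, q')) = fun q' : EuclideanSpace ℝ (Fin b) => ⟪q', φ x⟫ := by
      ext q'; exact hS x q'
    rw [this, grad_inner_const]
  have hgx : ∀ x q, gradx S x q = ContinuousLinearMap.adjoint (fderiv ℝ φ x) q := by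
    intro x q
    unfold gradx
    have : (fun x' => S (x', q)) = fun x' : EuclideanSpace ℝ (Fin a) => ⟪q, φ x'⟫ := by
      ext x'; exact hS x' q
    rw [this, grad_inner_comp φ x q (hφ.differentiable one_ne_zero x)]
  constructor
  · ext z
    simp only [thickRel, Set.mem_setOf_eq]
    constructor
    · rintro ⟨h1, h2⟩
      exact ⟨z.2.1, z.1.2, by
        rw [hgq] at h1; rw [hgx] at h2
        ext <;> simp [← h1, ← h2]⟩
    · rintro ⟨x, q, rfl⟩
      exact ⟨(hgq x q).symm, (hgx x q).symm⟩
  · intro g hg x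
    refine ⟨rfl, (hgq x _).symm, ?_⟩
    rw [hS]
    ring
end
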